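/- Let V and W be finite-dimensional real vector spaces, φ : V → W linear and surjective, and C ⊆ V a closed convex cone with C ∩ ker φ = {0}. Then φ restricted to C is a proper map and φ(C) is a closed convex cone in W. -/
import Mathlib


/-- If `φ : V → W` is a surjective linear map between finite-dimensional real vector
spaces and `C` is a closed convex cone with `C ∩ ker φ = {0}`, then `φ` is proper on `C`
and `φ(C)` is a closed convex cone in `W`. -/
theorem stmt_10 (V W : Type*) [NormedAddCommGroup V] [NormedSpace ℝ V]
    [FiniteDimensional ℝ V] [NormedAddCommGroup W] [NormedSpace ℝ W]
    [FiniteDimensional ℝ W]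
    (φ : V →ₗ[ℝ] W) (hsurj : Function.Surjective φ)
    (C : ConvexCone ℝ V) (hCclosed : IsClosed (C : Set V))
    (hker : (C : Set V) ∩ (LinearMap.ker φ : Set V) = {0}) :
    (∀ K : Set W, IsCompact K → IsCompact ((C : Set V) ∩ φ ⁻¹' K)) ∧
    IsClosed (φ '' (C : Set V)) ∧
    Convex ℝ (φ '' (C : Set V)) ∧
    (∀ c : ℝ, 0 < c → ∀ x ∈ φ '' (C : Set V), c • x ∈ φ '' (C : Set V)) := by
  have φcont : Continuous φ := φ.continuous_of_finiteDimensional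
  have hinj : ∀ x ∈ (C : Set V), φ x = 0 → x = 0 := by
    intro x hx h0
    have : x ∈ (C : Set V) ∩ (LinearMap.ker φ : Set V) := ⟨hx, h0⟩
    rw [hker] at this
    exact this
  -- key bound: ε * ‖x‖ ≤ ‖φ x‖ on C
  obtain ⟨ε, hε, hbound⟩ : ∃ ε > 0, ∀ x ∈ (C : Set V), ε * ‖x‖ ≤ ‖φ x‖ := by
    by_cases hS : ((C : Set V) ∩ Metric.sphere (0 : V) 1).Nonempty
    · have hcomp : IsCompact ((C : Set V) ∩ Metric.sphere (0 : V) 1) :=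
        (isCompact_sphere (0 : V) 1).inter_left hCclosed
      obtain ⟨x₀, hx₀, hmin⟩ := hcomp.exists_isMinOn hS
        ((continuous_norm.comp φcont).continuousOn)
      have hx₀ne : x₀ ≠ 0 := by
        intro h
        have := hx₀.2
        rw [h] at this
        simp at this
      have hεpos : 0 < ‖φ x₀‖ := by
        rw [norm_pos_iff]
        intro h
        exact hx₀ne (hinj x₀ hx₀.1 h)
      refine ⟨‖φ x₀‖, hεpos, fun x hx => ?_⟩
      rcases eq_or_ne x 0 with rfl | hxne
      · simp
      · have hnx : 0 < ‖x‖ := norm_pos_iff.mpr hxne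
        have hmem : ‖x‖⁻¹ • x ∈ (C : Set V) ∩ Metric.sphere (0 : V) 1 := by
          refine ⟨C.smul_mem (inv_pos.mpr hnx) hx, ?_⟩
          simp [norm_smul, abs_of_pos (inv_pos.mpr hnx), inv_mul_cancel₀ hnx.ne']
        have := hmin hmem
        have h2 : ‖φ x₀‖ ≤ ‖x‖⁻¹ * ‖φ x‖ := by
          simpa [norm_smul, abs_of_pos (inv_pos.mpr hnx)] using this
        calc ‖φ x₀‖ * ‖x‖ ≤ (‖x‖⁻¹ * ‖φ x‖) * ‖x‖ := by
              exact mul_le_mul_of_nonneg_right h2 hnx.le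
          _ = ‖φ x‖ := by field_simp
    · refine ⟨1, one_pos, fun x hx => ?_⟩
      rcases eq_or_ne x 0 with rfl | hxne
      · simp
      · exfalso
        have hnx : 0 < ‖x‖ := norm_pos_iff.mpr hxne
        exact hS ⟨‖x‖⁻¹ • x, C.smul_mem (inv_pos.mpr hnx) hx, by
          simp [norm_smul, abs_of_pos (inv_pos.mpr hnx), inv_mul_cancel₀ hnx.ne']⟩
  have hproper : ∀ K : Set W, IsCompact K → IsCompact ((C : Set V) ∩ φ ⁻¹' K) := by
    intro K hK
    obtain ⟨R, hR⟩ : ∃ R, ∀ w ∈ K, ‖w‖ ≤ R := by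
      obtain ⟨R, hR⟩ := hK.isBounded.subset_closedBall 0
      exact ⟨R, fun w hw => by simpa using hR hw⟩
    have hclosed : IsClosed ((C : Set V) ∩ φ ⁻¹' K) :=
      hCclosed.inter (hK.isClosed.preimage φcont)
    have hsub : (C : Set V) ∩ φ ⁻¹' K ⊆ Metric.closedBall 0 (R / ε) := by
      intro x ⟨hxC, hxK⟩
      simp only [Metric.mem_closedBall, dist_zero_right]
      rw [le_div_iff₀ hε, mul_comm]
      exact (hbound x hxC).trans (hR _ hxK)
    exact (isCompact_closedBall (0 : V) (R / ε)).of_isClosed_subset hclosed hsub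
  refine ⟨hproper, ?_, (C.convex).linear_image φ, ?_⟩
  · rw [← isSeqClosed_iff_isClosed]
    intro ys y hys hlim
    -- use properness with K = closed ball around y
    have hKc : IsCompact (Metric.closedBall y 1) := isCompact_closedBall y 1
    have hcomp := hproper _ hKc
    have himg : IsClosed (φ '' ((C : Set V) ∩ φ ⁻¹' Metric.closedBall y 1)) :=
      (hcomp.image φcont).isClosed
    have hy : y ∈ φ '' ((C : Set V) ∩ φ ⁻¹' Metric.closedBall y 1) := by
      apply himg.mem_of_tendsto hlim
      filter_upwards [hlim (Metric.closedBall_mem_nhds y one_pos)] with n hn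
      obtain ⟨x, hxC, hx⟩ := hys n
      refine ⟨x, ⟨hxC, ?_⟩, hx⟩
      simpa [Set.mem_preimage, hx] using hn
    obtain ⟨x, ⟨hxC, _⟩, hx⟩ := hy
    exact ⟨x, hxC, hx⟩
  · rintro c hc y ⟨x, hx, rfl⟩
    exact ⟨c • x, C.smul_mem hc hx, by simp⟩
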